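/- Let P and Q be nonempty polyhedra in ℝ^n (each a finite intersection of closed half-spaces) with dist(P, Q) = 0, i.e. inf{‖p − q‖ : p ∈ P, q ∈ Q} = 0. Then P ∩ Q ≠ ∅. -/

import Mathlib

open Finset

lemma sum_extend_zero {E : Type*} [AddCommGroup E] [Module ℝ E] {ι : Type*} [Fintype ι]
    [DecidableEq ι] (s : Finset ι) (g : ↥s → ℝ) (v : ι → E) :
    ∑ i, (if h : i ∈ s then g ⟨i, h⟩ else 0) • v i = ∑ i : ↥s, g i • v i := by
  rw [← Finset.sum_subset (Finset.subset_univ s) (by intro i _ hi; simp [hi])]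
  rw [← Finset.sum_attach s fun i => (if h : i ∈ s then g ⟨i, h⟩ else 0) • v i]
  exact Finset.sum_congr rfl fun i _ => by simp [i.2]

lemma cone_carath {E : Type*} [AddCommGroup E] [Module ℝ E] {ι : Type*} [Fintype ι]
    [DecidableEq ι] (v : ι → E) :
    ∀ (m : ℕ) (y : ι → ℝ), (∀ i, 0 ≤ y i) →
      ((univ.filter fun i => y i ≠ 0).card ≤ m) →
      ∃ (s : Finset ι) (z : ι → ℝ), (∀ i, 0 ≤ z i) ∧ (∀ i ∉ s, z i = 0) ∧
        LinearIndependent ℝ (fun i : s => v i) ∧ ∑ i, z i • v i = ∑ i, y i • v i := by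
  intro m
  induction m with
  | zero =>
    intro y hy hcard
    have hins : ∀ i, y i = 0 := by
      intro i
      by_contra h
      have : i ∈ univ.filter fun i => y i ≠ 0 := by simp [h]
      rw [Finset.card_eq_zero.mp (Nat.le_zero.mp hcard)] at this
      simpa using this
    refine ⟨∅, y, hy, fun i _ => hins i, ?_, rfl⟩
    have : IsEmpty ((∅ : Finset ι) : Set ι) := by simp
    exact linearIndependent_empty_type
  | succ m ih =>
    intro y hy hcard
    set s : Finset ι := univ.filter fun i => y i ≠ 0 with hs
    by_cases hLI : LinearIndependent ℝ (fun i : s => v i)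
    · exact ⟨s, y, hy, fun i hi => by_contra fun h => hi (by simp [hs, h]), hLI, rfl⟩
    · obtain ⟨g, hgsum, i₁, hgi₁⟩ := Fintype.not_linearIndependent_iff.mp hLI
      have key : ∃ G : ι → ℝ, (∀ i ∉ s, G i = 0) ∧ (∑ i, G i • v i = 0) ∧ ∃ i ∈ s, 0 < G i := by
        rcases lt_or_gt_of_ne hgi₁ with hneg | hpos
        · refine ⟨fun i => if h : i ∈ s then -g ⟨i, h⟩ else 0, fun i hi => by simp [hi], ?_,
            i₁, i₁.2, by simp only [Subtype.coe_eta, dif_pos i₁.2]; linarith⟩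
          show ∑ i, (if h : i ∈ s then (fun j => -g j) ⟨i, h⟩ else 0) • v i = 0
          rw [sum_extend_zero s (fun j => -g j) v]
          simp only [neg_smul, Finset.sum_neg_distrib, hgsum, neg_zero]
        · refine ⟨fun i => if h : i ∈ s then g ⟨i, h⟩ else 0, fun i hi => by simp [hi], ?_,
            i₁, i₁.2, by simp only [Subtype.coe_eta, dif_pos i₁.2]; linarith⟩
          show ∑ i, (if h : i ∈ s then g ⟨i, h⟩ else 0) • v i = 0
          rw [sum_extend_zero s g v]; exact hgsum
      obtain ⟨G, hGout, hGsum, i₂, hi₂s, hGi₂⟩ := key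
      -- minimize y i / G i over positive G i
      have hTne : (univ.filter fun i => 0 < G i).Nonempty := ⟨i₂, by simp [hGi₂]⟩
      obtain ⟨i₀, hi₀mem, hi₀min⟩ :=
        Finset.exists_min_image _ (fun i => y i / G i) hTne
      rw [Finset.mem_filter] at hi₀mem
      have hGi₀ : 0 < G i₀ := hi₀mem.2
      have hi₀s : i₀ ∈ s := by
        by_contra h
        rw [hGout i₀ h] at hGi₀
        exact lt_irrefl 0 hGi₀
      set t : ℝ := y i₀ / G i₀ with ht
      have htnn : 0 ≤ t := div_nonneg (hy i₀) hGi₀.le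
      set z : ι → ℝ := fun i => y i - t * G i with hz
      have hznn : ∀ i, 0 ≤ z i := by
        intro i
        by_cases hGi : 0 < G i
        · have := hi₀min i (Finset.mem_filter.mpr ⟨Finset.mem_univ i, hGi⟩)
          have : t * G i ≤ y i := by
            rw [ht]
            calc y i₀ / G i₀ * G i ≤ y i / G i * G i := by
                  apply mul_le_mul_of_nonneg_right this hGi.le
              _ = y i := by field_simp
          simp [hz]; linarith
        · push_neg at hGi
          have : t * G i ≤ 0 := mul_nonpos_of_nonneg_of_nonpos htnn hGi
          simp only [hz]
          linarith [hy i]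
      have hzsupp : ∀ i, z i ≠ 0 → i ∈ s.erase i₀ := by
        intro i hzi
        rw [Finset.mem_erase]
        constructor
        · rintro rfl
          apply hzi
          simp only [hz, ht]
          field_simp
          ring
        · by_contra hi
          apply hzi
          have hyi : y i = 0 := by
            by_contra h
            exact hi (by simp [hs, h])
          have hGi : G i = 0 := hGout i hi
          simp [hz, hyi, hGi]
      have hzcard : (univ.filter fun i => z i ≠ 0).card ≤ m := by
        have hsub : (univ.filter fun i => z i ≠ 0) ⊆ s.erase i₀ := by
          intro i hi
          exact hzsupp i (by simpa using hi)
        have h1 : (s.erase i₀).card < s.card :=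
          Finset.card_erase_lt_of_mem hi₀s
        have h2 : (univ.filter fun i => z i ≠ 0).card ≤ (s.erase i₀).card :=
          Finset.card_le_card hsub
        omega
      have hzval : ∑ i, z i • v i = ∑ i, y i • v i := by
        simp only [hz, sub_smul, Finset.sum_sub_distrib, mul_smul]
        rw [← Finset.smul_sum, hGsum, smul_zero, sub_zero]
      obtain ⟨s', z', h1, h2, h3, h4⟩ := ih z hznn hzcard
      exact ⟨s', z', h1, h2, h3, h4.trans hzval⟩

lemma sum_extend_zero' {E : Type*} [AddCommGroup E] [Module ℝ E] {ι : Type*} [Fintype ι]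
    [DecidableEq ι] (s : Finset ι) (y : ι → ℝ) (hy : ∀ i ∉ s, y i = 0) (v : ι → E) :
    ∑ i : ↥s, y i • v i = ∑ i, y i • v i := by
  rw [← Finset.sum_subset (Finset.subset_univ s) (fun i _ hi => by rw [hy i hi, zero_smul])]
  exact Finset.sum_attach s fun i => y i • v i

lemma isClosed_fgcone {E : Type*} [NormedAddCommGroup E] [NormedSpace ℝ E]
    [FiniteDimensional ℝ E] {ι : Type*} [Fintype ι] [DecidableEq ι] (v : ι → E) :
    IsClosed {x : E | ∃ y : ι → ℝ, (∀ i, 0 ≤ y i) ∧ ∑ i, y i • v i = x} := by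
  have hset : {x : E | ∃ y : ι → ℝ, (∀ i, 0 ≤ y i) ∧ ∑ i, y i • v i = x} =
      ⋃ s : Finset ι, {x : E | LinearIndependent ℝ (fun i : s => v i) ∧
        ∃ y : ι → ℝ, (∀ i, 0 ≤ y i) ∧ (∀ i ∉ s, y i = 0) ∧ ∑ i, y i • v i = x} := by
    ext x
    simp only [Set.mem_setOf_eq, Set.mem_iUnion]
    constructor
    · rintro ⟨y, hy, rfl⟩
      obtain ⟨s, z, h1, h2, h3, h4⟩ :=
        cone_carath v (univ.filter fun i => y i ≠ 0).card y hy le_rfl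
      exact ⟨s, h3, z, h1, h2, h4⟩
    · rintro ⟨s, _, y, hy, _, rfl⟩
      exact ⟨y, hy, rfl⟩
  rw [hset]
  apply isClosed_iUnion_of_finite
  intro s
  by_cases hLI : LinearIndependent ℝ (fun i : s => v i)
  · have himg : {x : E | LinearIndependent ℝ (fun i : s => v i) ∧
        ∃ y : ι → ℝ, (∀ i, 0 ≤ y i) ∧ (∀ i ∉ s, y i = 0) ∧ ∑ i, y i • v i = x} =
        (Fintype.linearCombination ℝ (fun i : s => v i)) ''
          {w : ↥s → ℝ | ∀ i, 0 ≤ w i} := by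
      ext x
      simp only [Set.mem_setOf_eq, Set.mem_image, Fintype.linearCombination_apply]
      constructor
      · rintro ⟨_, y, hy, hy0, rfl⟩
        exact ⟨fun i => y i, fun i => hy i, (sum_extend_zero' s y hy0 v)⟩
      · rintro ⟨w, hw, rfl⟩
        refine ⟨hLI, fun i => if h : i ∈ s then w ⟨i, h⟩ else 0,
          fun i => ?_, fun i hi => by simp [hi], sum_extend_zero s w v⟩
        by_cases h : i ∈ s
        · simpa [h] using hw ⟨i, h⟩
        · simp [h]
    rw [himg]
    have hker : LinearMap.ker (Fintype.linearCombination ℝ (fun i : s => v i)) = ⊥ := by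
      rw [LinearMap.ker_eq_bot']
      intro w hw
      rw [Fintype.linearCombination_apply] at hw
      exact funext (Fintype.linearIndependent_iff.mp hLI w hw)
    have hce := LinearMap.isClosedEmbedding_of_injective hker
    apply hce.isClosedMap
    have : {w : ↥s → ℝ | ∀ i, 0 ≤ w i} = ⋂ i, {w : ↥s → ℝ | 0 ≤ w i} := by
      ext w; simp [Set.mem_iInter]
    rw [this]
    exact isClosed_iInter fun i => isClosed_le continuous_const (continuous_apply i)
  · convert isClosed_empty
    ext x
    simp only [Set.mem_setOf_eq, Set.mem_empty_iff_false, iff_false]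
    rintro ⟨h, -⟩
    exact hLI h
open scoped InnerProductSpace
open Finset in
lemma farkas_cone {E : Type*} [NormedAddCommGroup E] [InnerProductSpace ℝ E]
    [FiniteDimensional ℝ E] {ι : Type*} [Fintype ι] [DecidableEq ι] (v : ι → E) (b : E)
    (h : ∀ w : E, (∀ i, 0 ≤ ⟪v i, w⟫_ℝ) → 0 ≤ ⟪b, w⟫_ℝ) :
    ∃ y : ι → ℝ, (∀ i, 0 ≤ y i) ∧ ∑ i, y i • v i = b := by
  by_contra hb
  push_neg at hb
  set K : ConvexCone ℝ E :=
    { carrier := {x : E | ∃ y : ι → ℝ, (∀ i, 0 ≤ y i) ∧ ∑ i, y i • v i = x}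
      smul_mem' := by
        rintro c hc x ⟨y, hy, rfl⟩
        exact ⟨fun i => c * y i, fun i => mul_nonneg hc.le (hy i), by
          simp [Finset.smul_sum, mul_smul]⟩
      add_mem' := by
        rintro x ⟨y, hy, rfl⟩ x' ⟨y', hy', rfl⟩
        exact ⟨fun i => y i + y' i, fun i => add_nonneg (hy i) (hy' i), by
          simp [add_smul, Finset.sum_add_distrib]⟩ } with hK
  have hne : (K : Set E).Nonempty := ⟨0, ⟨fun _ => 0, fun i => le_rfl, by simp⟩⟩
  have hcl : IsClosed (K : Set E) := isClosed_fgcone v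
  have hbK : b ∉ K := by
    rintro ⟨y, hy, hsum⟩
    exact hb y hy hsum
  obtain ⟨w, hw1, hw2⟩ : ∃ w : E, (∀ x ∈ K, 0 ≤ ⟪x, w⟫_ℝ) ∧ ⟪w, b⟫_ℝ < 0 := by
    let C : ProperCone ℝ E :=
      { carrier := (K : Set E)
        add_mem' := fun ha hb => K.add_mem ha hb
        zero_mem' := ⟨fun _ => 0, fun _ => le_rfl, by simp⟩
        smul_mem' := by
          rintro c x ⟨y, hy, rfl⟩
          exact ⟨fun i => (c : ℝ) * y i, fun i => mul_nonneg c.2 (hy i), by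
            simp [Finset.smul_sum, mul_smul, NNReal.smul_def]⟩
        isClosed' := hcl }
    obtain ⟨w, h1, h2⟩ := ProperCone.hyperplane_separation' C hbK
    exact ⟨w, h1, by rwa [real_inner_comm]⟩
  have hvi : ∀ i, 0 ≤ ⟪v i, w⟫_ℝ := by
    intro i
    apply hw1
    refine ⟨fun j => if j = i then 1 else 0, fun j => by positivity, ?_⟩
    simp [ite_smul]
  have := h w hvi
  rw [real_inner_comm] at hw2
  linarith
open scoped InnerProductSpace in
open Finset in
lemma farkas_ineq {E : Type*} [NormedAddCommGroup E] [InnerProductSpace ℝ E]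
    [FiniteDimensional ℝ E] {ι : Type*} [Fintype ι] [DecidableEq ι]
    (r : ι → E) (d : ι → ℝ) (h : ¬ ∃ x : E, ∀ i, ⟪r i, x⟫_ℝ ≤ d i) :
    ∃ y : ι → ℝ, (∀ i, 0 ≤ y i) ∧ ∑ i, y i • r i = 0 ∧ ∑ i, y i * d i < 0 := by
  classical
  set F := WithLp 2 (E × ℝ) with hF
  haveI : FiniteDimensional ℝ F :=
    (WithLp.linearEquiv 2 ℝ (E × ℝ)).symm.finiteDimensional
  set e : (E × ℝ) ≃ₗ[ℝ] F := (WithLp.linearEquiv 2 ℝ (E × ℝ)).symm with he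
  set v : Option ι → F := fun o => Option.elim o (e (0, 1)) (fun i => e (r i, d i)) with hv
  have hsnd : ∀ (a : E) (t : ℝ) (w : F), ⟪e (a, t), w⟫_ℝ = ⟪a, w.fst⟫_ℝ + t * w.snd := by
    intro a t w
    rw [WithLp.prod_inner_apply]
    simp [he, mul_comm]
    rw [mul_comm]
    rfl
  have hyp : ∀ w : F, (∀ o, 0 ≤ ⟪v o, w⟫_ℝ) → 0 ≤ ⟪e (0, -1), w⟫_ℝ := by
    intro w hw
    rw [hsnd]
    simp only [inner_zero_left, zero_add, neg_one_mul, neg_nonneg]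
    by_contra hts
    push_neg at hts
    apply h
    refine ⟨(-(w.snd)⁻¹) • w.fst, fun i => ?_⟩
    have h1 := hw (some i)
    rw [hv] at h1
    simp only [Option.elim] at h1
    rw [hsnd] at h1
    rw [inner_smul_right]
    have h2 : w.snd⁻¹ * (⟪r i, w.fst⟫_ℝ + d i * w.snd) = w.snd⁻¹ * ⟪r i, w.fst⟫_ℝ + d i := by
      field_simp
    linarith [mul_nonneg (inv_nonneg.mpr hts.le) h1, h2]
  obtain ⟨y, hy, hsum⟩ := farkas_cone v (e (0, -1)) hyp
  have hsum' : ∑ o : Option ι, y o • (Option.elim o ((0:E), (1:ℝ)) (fun i => (r i, d i)))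
      = ((0 : E), (-1 : ℝ)) := by
    have hc := congrArg e.symm hsum
    rw [map_sum] at hc
    simp only [map_smul, LinearEquiv.symm_apply_apply] at hc
    rw [← hc]
    refine Finset.sum_congr rfl fun o _ => ?_
    cases o <;> simp [hv]
  rw [Fintype.sum_option] at hsum'
  have hfst := congrArg Prod.fst hsum'
  have hsnd' := congrArg Prod.snd hsum'
  simp only [Prod.fst_add, Prod.snd_add, Prod.fst_sum, Prod.snd_sum, Prod.smul_fst,
    Prod.smul_snd, Option.elim, smul_zero, zero_add, smul_eq_mul, mul_one] at hfst hsnd'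
  refine ⟨fun i => y (some i), fun i => hy (some i), hfst, ?_⟩
  have h0 : 0 ≤ y none := hy none
  calc ∑ i, y (some i) * d i = -1 - y none := by linarith [hsnd']
    _ < 0 := by linarith
open scoped InnerProductSpace in
open Finset in
theorem stmt6 (n k l : ℕ)
    (A : Matrix (Fin k) (Fin n) ℝ) (b : Fin k → ℝ)
    (B : Matrix (Fin l) (Fin n) ℝ) (c : Fin l → ℝ)
    (hP : {x : Fin n → ℝ | A.mulVec x ≤ b}.Nonempty)
    (hQ : {x : Fin n → ℝ | B.mulVec x ≤ c}.Nonempty)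
    (hdist : sInf {d : ℝ | ∃ p ∈ {x : Fin n → ℝ | A.mulVec x ≤ b},
        ∃ q ∈ {x : Fin n → ℝ | B.mulVec x ≤ c}, d = ‖p - q‖} = 0) :
    ({x : Fin n → ℝ | A.mulVec x ≤ b} ∩ {x : Fin n → ℝ | B.mulVec x ≤ c}).Nonempty := by
  classical
  by_contra hcon
  rw [Set.not_nonempty_iff_eq_empty] at hcon
  -- set up the combined system
  set r : (Fin k ⊕ Fin l) → EuclideanSpace ℝ (Fin n) :=
    Sum.elim (fun i => WithLp.toLp 2 (fun t => A i t)) (fun j => WithLp.toLp 2 (fun t => B j t)) with hr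
  set d : (Fin k ⊕ Fin l) → ℝ := Sum.elim b c with hd
  have hinner : ∀ (z : EuclideanSpace ℝ (Fin n)) (x : EuclideanSpace ℝ (Fin n)),
      ⟪z, x⟫_ℝ = ∑ t, z t * x t := by
    intro z x
    simp [PiLp.inner_apply, RCLike.inner_apply, starRingEnd_apply, mul_comm]
  have hmulA : ∀ (x : Fin n → ℝ) (i : Fin k), A.mulVec x i = ∑ t, A i t * x t := by
    intro x i; rfl
  have hmulB : ∀ (x : Fin n → ℝ) (j : Fin l), B.mulVec x j = ∑ t, B j t * x t := by
    intro x j; rfl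
  have hinfeas : ¬ ∃ x : EuclideanSpace ℝ (Fin n), ∀ i, ⟪r i, x⟫_ℝ ≤ d i := by
    rintro ⟨x, hx⟩
    have hxP : (x : Fin n → ℝ) ∈ {x : Fin n → ℝ | A.mulVec x ≤ b} := by
      intro i
      have := hx (Sum.inl i)
      rw [hinner] at this
      rw [hmulA]
      simpa [hr, hd] using this
    have hxQ : (x : Fin n → ℝ) ∈ {x : Fin n → ℝ | B.mulVec x ≤ c} := by
      intro j
      have := hx (Sum.inr j)
      rw [hinner] at this
      rw [hmulB]
      simpa [hr, hd] using this
    have : (x : Fin n → ℝ) ∈ ({x : Fin n → ℝ | A.mulVec x ≤ b} ∩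
        {x : Fin n → ℝ | B.mulVec x ≤ c}) := ⟨hxP, hxQ⟩
    rw [hcon] at this
    exact this
  obtain ⟨y, hy, hsum0, hneg⟩ := farkas_ineq r d hinfeas
  set u : Fin k → ℝ := fun i => y (Sum.inl i) with hu
  set vv : Fin l → ℝ := fun j => y (Sum.inr j) with hvv
  set w : Fin n → ℝ := fun t => ∑ i, u i * A i t with hwdef
  -- pointwise zero
  have hzero : ∀ t, w t + ∑ j, vv j * B j t = 0 := by
    intro t
    have hc := congrArg (WithLp.linearEquiv 2 ℝ (Fin n → ℝ)) hsum0
    rw [map_sum, map_zero] at hc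
    simp only [map_smul] at hc
    have ht := congrFun hc t
    rw [Finset.sum_apply] at ht
    simp only [Pi.smul_apply, Pi.zero_apply, smul_eq_mul] at ht
    rw [Fintype.sum_sum_type] at ht
    simpa [hr, hu, hvv, hwdef, WithLp.linearEquiv, mul_comm] using ht
  -- δ
  set δ : ℝ := -∑ i, y i * d i with hδ
  have hδpos : 0 < δ := by simp only [hδ]; linarith
  have hsplit : ∑ i, y i * d i = ∑ i, u i * b i + ∑ j, vv j * c j := by
    rw [Fintype.sum_sum_type]; rfl
  set W : ℝ := ∑ t, |w t| with hW
  -- main bound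
  have hbound : ∀ p ∈ {x : Fin n → ℝ | A.mulVec x ≤ b},
      ∀ q ∈ {x : Fin n → ℝ | B.mulVec x ≤ c}, δ ≤ W * ‖p - q‖ := by
    intro p hp q hq
    have hS1 : ∑ t, w t * p t = ∑ i, u i * A.mulVec p i := by
      simp only [hwdef, hmulA, Finset.sum_mul, Finset.mul_sum]
      rw [Finset.sum_comm]
      exact Finset.sum_congr rfl fun t _ => Finset.sum_congr rfl fun i _ => by ring
    have hS2 : ∑ t, w t * q t = -∑ j, vv j * B.mulVec q j := by
      have : ∀ t, w t = -∑ j, vv j * B j t := fun t => by linarith [hzero t]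
      calc ∑ t, w t * q t = ∑ t, (-∑ j, vv j * B j t) * q t :=
            Finset.sum_congr rfl fun t _ => by rw [← this t]
        _ = -∑ t, (∑ j, vv j * B j t) * q t := by
            simp [neg_mul]
        _ = -∑ j, vv j * B.mulVec q j := by
            congr 1
            simp only [hmulB, Finset.sum_mul, Finset.mul_sum]
            rw [Finset.sum_comm]
            exact Finset.sum_congr rfl fun t _ => Finset.sum_congr rfl fun j _ => by ring
    have hup : ∑ i, u i * A.mulVec p i ≤ ∑ i, u i * b i :=
      Finset.sum_le_sum fun i _ => mul_le_mul_of_nonneg_left (hp i) (hy (Sum.inl i))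
    have hvq : ∑ j, vv j * B.mulVec q j ≤ ∑ j, vv j * c j :=
      Finset.sum_le_sum fun j _ => mul_le_mul_of_nonneg_left (hq j) (hy (Sum.inr j))
    have hSle : ∑ t, w t * (p t - q t) ≤ -δ := by
      have : ∑ t, w t * (p t - q t) = ∑ t, w t * p t - ∑ t, w t * q t := by
        rw [← Finset.sum_sub_distrib]
        exact Finset.sum_congr rfl fun t _ => by ring
      rw [this, hS1, hS2, hδ]
      rw [hsplit]
      linarith
    have hSge : -(W * ‖p - q‖) ≤ ∑ t, w t * (p t - q t) := by
      rw [hW, Finset.sum_mul, ← Finset.sum_neg_distrib]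
      apply Finset.sum_le_sum
      intro t _
      have h1 : |p t - q t| ≤ ‖p - q‖ := by
        have := norm_le_pi_norm (p - q) t
        simpa [Real.norm_eq_abs] using this
      calc -(|w t| * ‖p - q‖) ≤ -(|w t| * |p t - q t|) := by
            have := mul_le_mul_of_nonneg_left h1 (abs_nonneg (w t))
            linarith
        _ = -|w t * (p t - q t)| := by rw [abs_mul]
        _ ≤ w t * (p t - q t) := neg_abs_le _
    linarith
  obtain ⟨p₀, hp₀⟩ := hP
  obtain ⟨q₀, hq₀⟩ := hQ
  have hWpos : 0 < W := by
    by_contra hWn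
    push_neg at hWn
    have := hbound p₀ hp₀ q₀ hq₀
    nlinarith [norm_nonneg (p₀ - q₀)]
  have hDne : {d : ℝ | ∃ p ∈ {x : Fin n → ℝ | A.mulVec x ≤ b},
      ∃ q ∈ {x : Fin n → ℝ | B.mulVec x ≤ c}, d = ‖p - q‖}.Nonempty :=
    ⟨‖p₀ - q₀‖, p₀, hp₀, q₀, hq₀, rfl⟩
  have hlow : δ / W ≤ sInf {d : ℝ | ∃ p ∈ {x : Fin n → ℝ | A.mulVec x ≤ b},
      ∃ q ∈ {x : Fin n → ℝ | B.mulVec x ≤ c}, d = ‖p - q‖} := by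
    apply le_csInf hDne
    rintro e ⟨p, hp, q, hq, rfl⟩
    rw [div_le_iff₀ hWpos]
    rw [mul_comm]
    exact hbound p hp q hq
  rw [hdist] at hlow
  have : 0 < δ / W := div_pos hδpos hWpos
  linarith
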